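/- Suppose q is degenerate with radical K ≠ 0. Then the homomorphism from the group G (generated by unit vectors in Cl(V,q)) to O(V,q) by twisted conjugation is not surjective: every element in the image acts on K as ±identity, whereas O(V,q) contains elements acting on K by any invertible linear map (assuming dim K ≥ 1 and the field has an element λ ≠ ±1 with appropriate properties, e.g. k infinite). -/

import Mathlib

open CliffordAlgebra QuadraticMap

section Aux

variable {k V : Type*} [Field k] [AddCommGroup V] [Module k V]

theorem my_iota_inj (Q : QuadraticForm k V) (h2 : (2 : k) ≠ 0) {a b : V}
    (h : ι Q a = ι Q b) : a = b := by
  haveI : Invertible (2 : k) := invertibleOfNonzero h2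
  have := congrArg (equivExterior Q) h
  simp only [equivExterior, changeFormEquiv_apply, changeForm_ι] at this
  exact (ExteriorAlgebra.ι_inj k a b).mp this

/-- a vector anticommuting with every `ι Q u` moves past a product of `n` of them
at the cost of `(-1)^n`. -/
theorem prod_mul_iota (Q : QuadraticForm k V) (x : V)
    (hx : ∀ w : V, polar Q x w = 0) :
    ∀ l : List V, (l.map (ι Q)).prod * ι Q x =
      ((-1 : k) ^ l.length) • (ι Q x * (l.map (ι Q)).prod) := by
  intro l
  induction l with
  | nil => simp
  | cons u t ih =>
    have hanti : ι Q u * ι Q x = - (ι Q x * ι Q u) := by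
      have h := CliffordAlgebra.ι_mul_ι_add_swap (Q := Q) u x
      have hp : polar Q u x = 0 := by rw [polar_comm]; exact hx u
      rw [hp, map_zero] at h
      linear_combination (norm := noncomm_ring) h
    simp only [List.map_cons, List.prod_cons, List.length_cons]
    rw [mul_assoc, ih, mul_smul_comm, ← mul_assoc, hanti, pow_succ, mul_smul,
      neg_one_smul, neg_mul, mul_assoc, smul_neg]

theorem prod_mul_rev (Q : QuadraticForm k V) :
    ∀ l : List V, (∀ u ∈ l, Q u = 1) →
      (l.map (ι Q)).prod * (l.reverse.map (ι Q)).prod = 1 := by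
  intro l
  induction l with
  | nil => simp
  | cons u t ih =>
    intro hl
    simp only [List.map_cons, List.prod_cons, List.reverse_cons, List.map_append,
      List.prod_append, List.map_cons, List.prod_cons, List.map_nil, List.prod_nil, mul_one]
    rw [mul_assoc, ← mul_assoc (t.map (ι Q)).prod, ih (fun v hv => hl v (List.mem_cons_of_mem _ hv)),
      one_mul, CliffordAlgebra.ι_sq_scalar, hl u List.mem_cons_self, map_one]

end Aux

/-- if `q` is degenerate with nonzero radical `K`, the homomorphism
`ρ : G → O(V,q)` (twisted conjugation by products of unit vectors) is not surjective:
every `ρ(g)` fixes `K` pointwise, while `O(V,q)` contains an element acting on `K` by a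
scalar `λ ∉ {1,-1}`.  Concretely, there is an orthogonal `f` scaling `K` by `λ` which is
not of the form `ρ(g)` for any product `g` of unit vectors. -/
theorem stmt16 {k V : Type*} [Field k] [AddCommGroup V] [Module k V]
    (Q : QuadraticForm k V) (h2 : (2 : k) ≠ 0)
    (lam : k) (hlam1 : lam ≠ 1) (hlam2 : lam ≠ -1) (hlam0 : lam ≠ 0)
    (K : Submodule k V)
    (hK : ∀ v : V, v ∈ K ↔ (Q v = 0 ∧ ∀ w : V, polar Q v w = 0))
    (hKne : K ≠ ⊥) :
    ∃ f : V ≃ₗ[k] V, (∀ v, Q (f v) = Q v) ∧ (∀ x ∈ K, f x = lam • x) ∧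
      ∀ l : List V, (∀ u ∈ l, Q u = 1) →
        ∀ ρg : V ≃ₗ[k] V,
          (∀ v, (l.map (ι Q)).prod * ι Q v * (l.reverse.map (ι Q)).prod =
            ((-1 : k) ^ l.length) • ι Q (ρg v)) →
          ρg ≠ f := by
  -- choose a complement of K and the projection onto K
  obtain ⟨W, hW⟩ := Submodule.exists_isCompl K
  set π : V →ₗ[k] V := K.subtype ∘ₗ (K.projectionOnto W hW) with hπ
  have hπK : ∀ v, π v ∈ K := fun v => (K.projectionOnto W hW v).2
  have hπfix : ∀ x ∈ K, π x = x := by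
    intro x hx
    simp [hπ, Submodule.projectionOnto_apply_left hW ⟨x, hx⟩]
  have hππ : ∀ v, π (π v) = π v := fun v => hπfix _ (hπK v)
  -- f = id + (lam - 1) • π,  inverse  id + (lam⁻¹ - 1) • π
  set F : V →ₗ[k] V := LinearMap.id + (lam - 1) • π with hF
  set G : V →ₗ[k] V := LinearMap.id + (lam⁻¹ - 1) • π with hG
  have hGF : ∀ v, G (F v) = v := by
    intro v
    simp only [hF, hG, LinearMap.add_apply, LinearMap.id_apply, LinearMap.smul_apply,
      map_add, _root_.map_smul, hππ]
    match_scalars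
    · ring
    · field_simp
      ring
  have hFG : ∀ v, F (G v) = v := by
    intro v
    simp only [hF, hG, LinearMap.add_apply, LinearMap.id_apply, LinearMap.smul_apply,
      map_add, _root_.map_smul, hππ]
    match_scalars
    · ring
    · field_simp
      ring
  refine ⟨LinearEquiv.ofLinear F G (LinearMap.ext hFG) (LinearMap.ext hGF), ?_, ?_, ?_⟩
  · -- Q (F v) = Q v
    intro v
    have hmem : (lam - 1) • π v ∈ K := K.smul_mem _ (hπK v)
    obtain ⟨hq0, hpol⟩ := (hK _).mp hmem
    have : Q (v + (lam - 1) • π v) = Q v := by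
      rw [QuadraticMap.map_add (⇑Q) v ((lam - 1) • π v), hq0, polar_comm, hpol v]
      ring
    simpa [hF] using this
  · -- f scales K by lam
    intro x hx
    have : F x = x + (lam - 1) • x := by
      simp [hF, hπfix x hx]
    simp only [LinearEquiv.ofLinear_apply, this]
    rw [← one_smul k x, smul_smul, ← add_smul]
    norm_num
  · -- no product of unit vectors gives f
    intro l hl ρg hρ hcontra
    -- pick a nonzero element of K
    obtain ⟨x, hxK, hx0⟩ := Submodule.exists_mem_ne_zero_of_ne_bot hKne
    obtain ⟨hq0, hpol⟩ := (hK x).mp hxK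
    -- ρg fixes x
    have key2 := hρ x
    have h1 : (l.map (ι Q)).prod * ι Q x * (l.reverse.map (ι Q)).prod
        = ((-1 : k) ^ l.length) • ι Q x := by
      rw [prod_mul_iota Q x hpol l, smul_mul_assoc, mul_assoc, prod_mul_rev Q l hl, mul_one]
    rw [h1] at key2
    have hne : ((-1 : k) ^ l.length) ≠ 0 := pow_ne_zero _ (by norm_num)
    have : ι Q x = ι Q (ρg x) := smul_right_injective _ hne key2
    have hfix : ρg x = x := (my_iota_inj Q h2 this).symm
    -- but f x = lam • x ≠ x
    rw [hcontra] at hfix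
    have hFx : F x = lam • x := by
      have : F x = x + (lam - 1) • x := by simp [hF, hπfix x hxK]
      rw [this, ← one_smul k x, smul_smul, ← add_smul]
      norm_num
    simp only [LinearEquiv.ofLinear_apply, hFx] at hfix
    have : (lam - 1) • x = 0 := by
      rw [sub_smul, one_smul, hfix, sub_self]
    rcases smul_eq_zero.mp this with h | h
    · exact hlam1 (sub_eq_zero.mp h)
    · exact hx0 h
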